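/- arXiv:2303.15385 — 3 statements merged into one kernel-verified Lean document; each statement's English description precedes it below -/
import Mathlib

section
/- The two point clouds T = {(1,1), (-1,1), (-2,0), (2,0)} and K = {(0,1), (-1,0), (0,-1), (3,0)} in the Euclidean plane have the same multiset of six pairwise distances {√2, √2, 2, √10, √10, 4}, yet there is no isometry of the plane mapping T onto K. -/
noncomputable abbrev E2 := EuclideanSpace ℝ (Fin 2)
noncomputable def pt (x y : ℝ) : E2 := (WithLp.equiv 2 (Fin 2 → ℝ)).symm ![x, y]

lemma dist_pt (a b c d : ℝ) : dist (pt a b) (pt c d) = Real.sqrt ((a-c)^2+(b-d)^2) := by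
  rw [EuclideanSpace.dist_eq]
  simp [pt, Fin.sum_univ_two, Real.dist_eq, sq_abs]

lemma sqrt4 : Real.sqrt 4 = 2 := by
  rw [show (4:ℝ) = 2^2 by norm_num, Real.sqrt_sq (by norm_num)]

lemma sqrt16 : Real.sqrt 16 = 4 := by
  rw [show (16:ℝ) = 4^2 by norm_num, Real.sqrt_sq (by norm_num)]

/-- The clouds T = {(1,1),(-1,1),(-2,0),(2,0)} and K = {(0,1),(-1,0),(0,-1),(3,0)}
have the same multiset of six pairwise distances {√2,√2,2,√10,√10,4}, yet no
isometry of the plane maps T onto K. -/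
theorem stmt0 :
    ({dist (pt 1 1) (pt (-1) 1), dist (pt 1 1) (pt (-2) 0), dist (pt 1 1) (pt 2 0),
      dist (pt (-1) 1) (pt (-2) 0), dist (pt (-1) 1) (pt 2 0),
      dist (pt (-2) 0) (pt 2 0)} : Multiset ℝ)
      = {Real.sqrt 2, Real.sqrt 2, 2, Real.sqrt 10, Real.sqrt 10, 4} ∧
    ({dist (pt 0 1) (pt (-1) 0), dist (pt 0 1) (pt 0 (-1)), dist (pt 0 1) (pt 3 0),
      dist (pt (-1) 0) (pt 0 (-1)), dist (pt (-1) 0) (pt 3 0),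
      dist (pt 0 (-1)) (pt 3 0)} : Multiset ℝ)
      = {Real.sqrt 2, Real.sqrt 2, 2, Real.sqrt 10, Real.sqrt 10, 4} ∧
    ¬ ∃ f : E2 ≃ᵢ E2,
        f '' ({pt 1 1, pt (-1) 1, pt (-2) 0, pt 2 0} : Set E2)
          = ({pt 0 1, pt (-1) 0, pt 0 (-1), pt 3 0} : Set E2) := by
  refine ⟨?_, ?_, ?_⟩
  · simp only [dist_pt]; norm_num [sqrt4, sqrt16]; simp [Multiset.cons_swap]
  · simp only [dist_pt]; norm_num [sqrt4, sqrt16]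
    simp only [Multiset.cons_swap]
    show (2:ℝ) ::ₘ 4 ::ₘ Real.sqrt 2 ::ₘ Real.sqrt 10 ::ₘ Real.sqrt 10 ::ₘ 0
        = 2 ::ₘ Real.sqrt 2 ::ₘ Real.sqrt 10 ::ₘ Real.sqrt 10 ::ₘ 4 ::ₘ 0
    rw [Multiset.cons_swap 4, Multiset.cons_swap 4, Multiset.cons_swap 4]
  · rintro ⟨f, hf⟩
    have hv : pt (-1) 0 ∈ f '' ({pt 1 1, pt (-1) 1, pt (-2) 0, pt 2 0} : Set E2) := by
      rw [hf]; simp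
    have hu : pt 0 1 ∈ f '' ({pt 1 1, pt (-1) 1, pt (-2) 0, pt 2 0} : Set E2) := by
      rw [hf]; simp
    have hw : pt 0 (-1) ∈ f '' ({pt 1 1, pt (-1) 1, pt (-2) 0, pt 2 0} : Set E2) := by
      rw [hf]; simp
    obtain ⟨p, hp, hfp⟩ := hv
    obtain ⟨q, hq, hfq⟩ := hu
    obtain ⟨r, hr, hfr⟩ := hw
    have hne : q ≠ r := by
      intro h
      rw [h, hfr] at hfq
      have h2 : dist (pt 0 (-1)) (pt 0 1) = 0 := by rw [hfq, dist_self]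
      rw [dist_pt] at h2
      rw [Real.sqrt_eq_zero'] at h2
      norm_num at h2
    have hdq : dist p q = Real.sqrt 2 := by
      rw [← f.dist_eq p q, hfp, hfq, dist_pt]; norm_num
    have hdr : dist p r = Real.sqrt 2 := by
      rw [← f.dist_eq p r, hfp, hfr, dist_pt]; norm_num
    simp only [Set.mem_insert_iff, Set.mem_singleton_iff] at hp hq hr
    rcases hp with hp | hp | hp | hp <;> rcases hq with hq | hq | hq | hq <;>
      rcases hr with hr | hr | hr | hr <;> subst hp <;> subst hq <;> subst hr <;>
      first
      | exact hne rfl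
      | (rw [dist_pt, Real.sqrt_inj (by positivity) (by norm_num)] at hdq; norm_num at hdq; done)
      | (rw [dist_pt, Real.sqrt_inj (by positivity) (by norm_num)] at hdr; norm_num at hdr; done)
end

section
/- Define for two h-point ordered tuples A ⊂ C and A' ⊂ C' in m-point clouds the quantity M∞ = min over permutations ξ ∈ S_h of max{L∞(ξ(D(A)), D(A')), W∞(ξ(R(C;A)), R(C';A'))}. Then M∞ satisfies the symmetry and triangle inequality axioms of a metric on Relative Distance Distributions, and M∞ = 0 if and only if RDD(C;A) = RDD(C';A'). -/
/-- `L∞` distance between two h×h matrices: the maximum absolute difference of entries. -/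
noncomputable def Linf {h : ℕ} (D D' : Fin h → Fin h → ℝ) : ℝ :=
  ⨆ i, ⨆ j, |D i j - D' i j|

/-- Bottleneck distance `W∞` between two collections of k columns (unlabeled points of ℝ^h
with the ℓ∞ norm; the sup metric on `Fin h → ℝ` is the ℓ∞ metric): the infimum over
bijections of the largest ℓ∞ distance between matched columns. -/
noncomputable def Winf {k h : ℕ} (R R' : Fin k → Fin h → ℝ) : ℝ :=
  ⨅ g : Equiv.Perm (Fin k), ⨆ j, dist (R j) (R' (g j))

/-- The max metric `M∞` on Relative Distance Distributions: the minimum over permutations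
ξ of the h points of A of the larger of `L∞(ξ(D), D')` and `W∞(ξ(R), R')`, where ξ acts on
D by permuting indices and on R by permuting the rows of each column. -/
noncomputable def Minf {h k : ℕ} (D D' : Fin h → Fin h → ℝ) (R R' : Fin k → Fin h → ℝ) : ℝ :=
  ⨅ ξ : Equiv.Perm (Fin h),
    max (Linf (fun i j => D (ξ i) (ξ j)) D') (Winf (fun c => R c ∘ ξ) R')

section Aux

lemma myCiSup_equiv {α β : Type*} (e : α ≃ β) (f : β → ℝ) : ⨆ a, f (e a) = ⨆ b, f b := by
  simp only [iSup]
  congr 1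
  exact e.surjective.range_comp f

lemma myCiInf_equiv {α β : Type*} (e : α ≃ β) (f : β → ℝ) : ⨅ a, f (e a) = ⨅ b, f b := by
  simp only [iInf]
  congr 1
  exact e.surjective.range_comp f

lemma myExists_iInf_eq {α : Type*} [Finite α] [Nonempty α] (f : α → ℝ) :
    ∃ a, iInf f = f a := by
  obtain ⟨a, ha⟩ := Finite.exists_min f
  exact ⟨a, le_antisymm (ciInf_le (Finite.bddBelow_range f) a) (le_ciInf ha)⟩

lemma myLinf_nonneg {h : ℕ} (D D' : Fin h → Fin h → ℝ) : 0 ≤ Linf D D' :=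
  Real.iSup_nonneg fun _ => Real.iSup_nonneg fun _ => abs_nonneg _

lemma myWinf_nonneg {k h : ℕ} (R R' : Fin k → Fin h → ℝ) : 0 ≤ Winf R R' :=
  Real.iInf_nonneg fun _ => Real.iSup_nonneg fun _ => dist_nonneg

lemma myLinf_le {h : ℕ} {D D' : Fin h → Fin h → ℝ} {r : ℝ} (hr : 0 ≤ r)
    (H : ∀ i j, |D i j - D' i j| ≤ r) : Linf D D' ≤ r :=
  Real.iSup_le (fun i => Real.iSup_le (H i) hr) hr

lemma myLe_Linf {h : ℕ} (D D' : Fin h → Fin h → ℝ) (i j : Fin h) :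
    |D i j - D' i j| ≤ Linf D D' :=
  le_trans (le_ciSup (f := fun j => |D i j - D' i j|) (Finite.bddAbove_range _) j)
    (le_ciSup (f := fun i => ⨆ j, |D i j - D' i j|) (Finite.bddAbove_range _) i)

lemma myDist_comp_perm_le {h : ℕ} (f g : Fin h → ℝ) (σ : Equiv.Perm (Fin h)) :
    dist (f ∘ σ) (g ∘ σ) ≤ dist f g :=
  (dist_pi_le_iff dist_nonneg).2 fun i => dist_le_pi_dist f g (σ i)

lemma myDist_comp_perm {h : ℕ} (f g : Fin h → ℝ) (σ : Equiv.Perm (Fin h)) :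
    dist (f ∘ σ) (g ∘ σ) = dist f g := by
  refine le_antisymm (myDist_comp_perm_le f g σ) ?_
  have := myDist_comp_perm_le (f ∘ σ) (g ∘ σ) σ⁻¹
  have h1 : (f ∘ ⇑σ) ∘ ⇑σ⁻¹ = f := by
    funext x; simp [Function.comp]
  have h2 : (g ∘ ⇑σ) ∘ ⇑σ⁻¹ = g := by
    funext x; simp [Function.comp]
  rwa [h1, h2] at this

/-- the inversion equivalence on a group -/
def invEquiv (G : Type*) [Group G] : G ≃ G :=
  ⟨fun g => g⁻¹, fun g => g⁻¹, fun g => inv_inv g, fun g => inv_inv g⟩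

end Aux

/-- `M∞` satisfies symmetry and the triangle inequality on Relative Distance
Distributions (pairs [D,R] of a triangular distance matrix and a matrix of columns),
and `M∞ = 0` if and only if the two RDDs are equal, i.e. the pairs [D,R] and [D',R']
are related by a permutation ξ of the h points together with a bijection of columns. -/
theorem stmt7 {h k : ℕ} (D D' D'' : Fin h → Fin h → ℝ) (R R' R'' : Fin k → Fin h → ℝ) :
    Minf D D' R R' = Minf D' D R' R ∧
    Minf D D'' R R'' ≤ Minf D D' R R' + Minf D' D'' R' R'' ∧
    (Minf D D' R R' = 0 ↔
      ∃ ξ : Equiv.Perm (Fin h), (∀ i j, D' i j = D (ξ i) (ξ j)) ∧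
        ∃ g : Equiv.Perm (Fin k), ∀ c, R' (g c) = R c ∘ ξ) := by
  -- key symmetry lemma for the summand
  have key : ∀ (D D' : Fin h → Fin h → ℝ) (R R' : Fin k → Fin h → ℝ) (ξ : Equiv.Perm (Fin h)),
      max (Linf (fun i j => D (ξ i) (ξ j)) D') (Winf (fun c => R c ∘ ξ) R') =
      max (Linf (fun i j => D' (ξ⁻¹ i) (ξ⁻¹ j)) D) (Winf (fun c => R' c ∘ ⇑(ξ⁻¹)) R) := by
    intro D D' R R' ξ
    congr 1
    · -- Linf part
      unfold Linf
      rw [← myCiSup_equiv (ξ : Fin h ≃ Fin h)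
        (fun i => ⨆ j, |D' (ξ⁻¹ i) (ξ⁻¹ j) - D i j|)]
      refine iSup_congr fun i => ?_
      rw [← myCiSup_equiv (ξ : Fin h ≃ Fin h)
        (fun j => |D' (ξ⁻¹ (ξ i)) (ξ⁻¹ j) - D (ξ i) j|)]
      refine iSup_congr fun j => ?_
      simp [abs_sub_comm]
    · -- Winf part
      unfold Winf
      rw [← myCiInf_equiv (invEquiv (Equiv.Perm (Fin k)))
        (fun g => ⨆ j, dist (R' j ∘ ⇑(ξ⁻¹)) (R (g j)))]
      refine iInf_congr fun g => ?_
      show (⨆ j, dist (R j ∘ ⇑ξ) (R' (g j))) = ⨆ j, dist (R' j ∘ ⇑(ξ⁻¹)) (R (g⁻¹ j))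
      rw [← myCiSup_equiv (g : Fin k ≃ Fin k)
        (fun j => dist (R' j ∘ ⇑(ξ⁻¹)) (R (g⁻¹ j)))]
      refine iSup_congr fun j => ?_
      have hcomp : (R' (g j) ∘ ⇑(ξ⁻¹)) ∘ ⇑ξ = R' (g j) := by
        funext x; simp [Function.comp]
      rw [← myDist_comp_perm (R' (g j) ∘ ⇑(ξ⁻¹)) (R (g⁻¹ (g j))) ξ, hcomp]
      simp [dist_comm]
  have symm : ∀ (D D' : Fin h → Fin h → ℝ) (R R' : Fin k → Fin h → ℝ),
      Minf D D' R R' = Minf D' D R' R := by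
    intro D D' R R'
    unfold Minf
    rw [← myCiInf_equiv (invEquiv (Equiv.Perm (Fin h)))
      (fun ξ => max (Linf (fun i j => D' (ξ i) (ξ j)) D) (Winf (fun c => R' c ∘ ξ) R))]
    exact iInf_congr fun ξ => key D D' R R' ξ
  refine ⟨symm D D' R R', ?_, ?_⟩
  · -- triangle inequality
    obtain ⟨ξ1, hξ1⟩ := myExists_iInf_eq
      (fun ξ : Equiv.Perm (Fin h) =>
        max (Linf (fun i j => D (ξ i) (ξ j)) D') (Winf (fun c => R c ∘ ξ) R'))
    obtain ⟨ξ2, hξ2⟩ := myExists_iInf_eq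
      (fun ξ : Equiv.Perm (Fin h) =>
        max (Linf (fun i j => D' (ξ i) (ξ j)) D'') (Winf (fun c => R' c ∘ ξ) R''))
    rw [show Minf D D' R R' = _ from hξ1, show Minf D' D'' R' R'' = _ from hξ2]
    have step : Minf D D'' R R'' ≤
        max (Linf (fun i j => D ((ξ2.trans ξ1) i) ((ξ2.trans ξ1) j)) D'')
          (Winf (fun c => R c ∘ (ξ2.trans ξ1)) R'') :=
      ciInf_le (Finite.bddBelow_range _) (ξ2.trans ξ1)
    refine le_trans step ?_
    set L1 := Linf (fun i j => D (ξ1 i) (ξ1 j)) D'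
    set W1 := Winf (fun c => R c ∘ ξ1) R'
    set L2 := Linf (fun i j => D' (ξ2 i) (ξ2 j)) D''
    set W2 := Winf (fun c => R' c ∘ ξ2) R''
    have hL : Linf (fun i j => D ((ξ2.trans ξ1) i) ((ξ2.trans ξ1) j)) D'' ≤ L1 + L2 := by
      refine myLinf_le (add_nonneg (myLinf_nonneg _ _) (myLinf_nonneg _ _)) fun i j => ?_
      calc |D (ξ1 (ξ2 i)) (ξ1 (ξ2 j)) - D'' i j|
          ≤ |D (ξ1 (ξ2 i)) (ξ1 (ξ2 j)) - D' (ξ2 i) (ξ2 j)| + |D' (ξ2 i) (ξ2 j) - D'' i j| :=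
            abs_sub_le _ _ _
        _ ≤ L1 + L2 :=
            add_le_add (myLe_Linf (fun i j => D (ξ1 i) (ξ1 j)) D' (ξ2 i) (ξ2 j))
              (myLe_Linf (fun i j => D' (ξ2 i) (ξ2 j)) D'' i j)
    have hW : Winf (fun c => R c ∘ (ξ2.trans ξ1)) R'' ≤ W1 + W2 := by
      obtain ⟨g1, hg1⟩ := myExists_iInf_eq
        (fun g : Equiv.Perm (Fin k) => ⨆ j, dist (R j ∘ ξ1) (R' (g j)))
      obtain ⟨g2, hg2⟩ := myExists_iInf_eq
        (fun g : Equiv.Perm (Fin k) => ⨆ j, dist (R' j ∘ ξ2) (R'' (g j)))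
      have step2 : Winf (fun c => R c ∘ (ξ2.trans ξ1)) R'' ≤
          ⨆ j, dist (R j ∘ ⇑(ξ2.trans ξ1)) (R'' ((g1.trans g2) j)) :=
        ciInf_le (Finite.bddBelow_range _) (g1.trans g2)
      refine le_trans step2 ?_
      refine Real.iSup_le (fun j => ?_)
        (add_nonneg (myWinf_nonneg _ _) (myWinf_nonneg _ _))
      have hassoc : R j ∘ ⇑(ξ2.trans ξ1) = (R j ∘ ⇑ξ1) ∘ ⇑ξ2 := by
        funext x; simp [Function.comp]
      rw [hassoc]
      calc dist ((R j ∘ ⇑ξ1) ∘ ⇑ξ2) (R'' (g2 (g1 j)))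
          ≤ dist ((R j ∘ ⇑ξ1) ∘ ⇑ξ2) (R' (g1 j) ∘ ⇑ξ2)
            + dist (R' (g1 j) ∘ ⇑ξ2) (R'' (g2 (g1 j))) := dist_triangle _ _ _
        _ = dist (R j ∘ ⇑ξ1) (R' (g1 j)) + dist (R' (g1 j) ∘ ⇑ξ2) (R'' (g2 (g1 j))) := by
            rw [myDist_comp_perm]
        _ ≤ W1 + W2 := by
            refine add_le_add ?_ ?_
            · rw [show W1 = _ from hg1]
              exact le_ciSup (f := fun j => dist (R j ∘ ⇑ξ1) (R' (g1 j)))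
                (Finite.bddAbove_range _) j
            · rw [show W2 = _ from hg2]
              exact le_ciSup (f := fun j => dist (R' j ∘ ⇑ξ2) (R'' (g2 j)))
                (Finite.bddAbove_range _) (g1 j)
    exact max_le (le_trans hL (add_le_add (le_max_left _ _) (le_max_left _ _)))
      (le_trans hW (add_le_add (le_max_right _ _) (le_max_right _ _)))
  · -- zero characterization
    constructor
    · intro h0
      obtain ⟨ξ, hξ⟩ := myExists_iInf_eq
        (fun ξ : Equiv.Perm (Fin h) =>
          max (Linf (fun i j => D (ξ i) (ξ j)) D') (Winf (fun c => R c ∘ ξ) R'))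
      have hξ0 : max (Linf (fun i j => D (ξ i) (ξ j)) D') (Winf (fun c => R c ∘ ξ) R')
          = 0 := by rw [← hξ]; exact h0
      have hL0 : Linf (fun i j => D (ξ i) (ξ j)) D' = 0 :=
        le_antisymm (le_trans (le_max_left _ _) hξ0.le) (myLinf_nonneg _ _)
      have hW0 : Winf (fun c => R c ∘ ξ) R' = 0 :=
        le_antisymm (le_trans (le_max_right _ _) hξ0.le) (myWinf_nonneg _ _)
      refine ⟨ξ, fun i j => ?_, ?_⟩
      · have := myLe_Linf (fun i j => D (ξ i) (ξ j)) D' i j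
        rw [hL0] at this
        have := abs_nonpos_iff.mp this
        linarith [sub_eq_zero.mp this]
      · obtain ⟨g, hg⟩ := myExists_iInf_eq
          (fun g : Equiv.Perm (Fin k) => ⨆ j, dist (R j ∘ ξ) (R' (g j)))
        rw [show Winf (fun c => R c ∘ ξ) R' = _ from hg] at hW0
        refine ⟨g, fun c => ?_⟩
        have hle : dist (R c ∘ ξ) (R' (g c)) ≤ 0 := by
          rw [← hW0]
          exact le_ciSup (f := fun j => dist (R j ∘ ⇑ξ) (R' (g j)))
            (Finite.bddAbove_range _) c
        have : dist (R c ∘ ξ) (R' (g c)) = 0 := le_antisymm hle dist_nonneg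
        exact (dist_eq_zero.mp this).symm
    · rintro ⟨ξ, hD, g, hR⟩
      refine le_antisymm ?_ (Real.iInf_nonneg fun ξ =>
        le_max_of_le_left (myLinf_nonneg _ _))
      have hL0 : Linf (fun i j => D (ξ i) (ξ j)) D' ≤ 0 :=
        myLinf_le le_rfl fun i j => by rw [hD i j]; simp
      have hW0 : Winf (fun c => R c ∘ ξ) R' ≤ 0 := by
        refine le_trans (ciInf_le (Finite.bddBelow_range _) g) ?_
        refine Real.iSup_le (fun j => ?_) le_rfl
        rw [hR j]
        simp
      refine le_trans (ciInf_le (Finite.bddBelow_range _) ξ) ?_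
      exact max_le hL0 hW0
end

section
/- Let C' be obtained from an m-point cloud C in a metric space by perturbing each point within its ε-neighborhood. Then for any 1 ≤ h < m, the matrices D and R of corresponding subsets satisfy: for the induced bijection between h-point subsets A ⊂ C and A' ⊂ C', every entry of D(A') differs from the corresponding entry of D(A) by at most 2ε, and the bottleneck distance between the column sets of R(C;A) and R(C';A') is at most 2ε; hence M∞(RDD(C;A), RDD(C';A')) ≤ 2ε. -/
/-- Let C' be obtained from an m-point cloud C = {p₁,…,p_m} in a metric space by
perturbing each point within its ε-neighborhood (d(pᵢ,p'ᵢ) ≤ ε).  For the induced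
bijection between h-point subsets (an h-tuple A of C, selected by ι, corresponds to
A' of C', with the complement C∖A enumerated by κ): every entry of D(A') differs
from the corresponding entry of D(A) by at most 2ε, the bottleneck distance between
the column sets of R(C;A) and R(C';A') is at most 2ε, and hence
M∞(RDD(C;A), RDD(C';A')) ≤ 2ε. -/
theorem stmt8 {X : Type*} [MetricSpace X] (m h : ℕ) (h1 : 1 ≤ h) (h2 : h < m)
    (ε : ℝ) (p p' : Fin m → X) (hpert : ∀ i, dist (p i) (p' i) ≤ ε)
    (hpinj : Function.Injective p) (hp'inj : Function.Injective p')
    (ι : Fin h → Fin m) (hι : Function.Injective ι)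
    (κ : Fin (m - h) → Fin m) (hκ : Function.Injective κ)
    (hdisj : ∀ j i, κ j ≠ ι i)
    (D : Fin h → Fin h → ℝ) (hD : D = fun i j => dist (p (ι i)) (p (ι j)))
    (D' : Fin h → Fin h → ℝ) (hD' : D' = fun i j => dist (p' (ι i)) (p' (ι j)))
    (R : Fin (m - h) → Fin h → ℝ) (hR : R = fun c i => dist (p (κ c)) (p (ι i)))
    (R' : Fin (m - h) → Fin h → ℝ) (hR' : R' = fun c i => dist (p' (κ c)) (p' (ι i))) :
    (∀ i j, |D' i j - D i j| ≤ 2 * ε) ∧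
    Winf R R' ≤ 2 * ε ∧
    Minf D D' R R' ≤ 2 * ε := by
  have hm : 0 < m := lt_of_le_of_lt (Nat.zero_le h) h2
  have hε : 0 ≤ ε := le_trans dist_nonneg (hpert ⟨0, hm⟩)
  have hε2 : (0:ℝ) ≤ 2 * ε := by linarith
  have key : ∀ a b : Fin m, |dist (p' a) (p' b) - dist (p a) (p b)| ≤ 2 * ε := by
    intro a b
    have := dist_dist_dist_le (p' a) (p' b) (p a) (p b)
    rw [Real.dist_eq] at this
    have h1 := hpert a; have h2 := hpert b
    rw [dist_comm (p a) (p' a)] at h1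
    rw [dist_comm (p b) (p' b)] at h2
    linarith
  have hkey : ∀ a b : Fin m, |dist (p a) (p b) - dist (p' a) (p' b)| ≤ 2 * ε := by
    intro a b; rw [abs_sub_comm]; exact key a b
  haveI : Nonempty (Fin h) := ⟨⟨0, h1⟩⟩
  haveI : Nonempty (Fin (m - h)) := ⟨⟨0, Nat.sub_pos_of_lt h2⟩⟩
  have hDist : ∀ (c : Fin (m-h)), dist (R c) (R' c) ≤ 2 * ε := by
    intro c
    rw [dist_pi_le_iff hε2]
    intro i
    rw [Real.dist_eq]
    simp only [hR, hR']
    exact hkey _ _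
  have hWbdd : BddBelow (Set.range fun g : Equiv.Perm (Fin (m-h)) => ⨆ j, dist (R j) (R' (g j))) := by
    refine ⟨0, fun x hx => ?_⟩
    obtain ⟨g, rfl⟩ := hx
    exact Real.iSup_nonneg fun j => dist_nonneg
  have hW : Winf R R' ≤ 2 * ε := by
    refine le_trans (ciInf_le hWbdd (Equiv.refl _)) ?_
    exact ciSup_le fun j => hDist j
  refine ⟨?_, ?_, ?_⟩
  · intro i j; rw [hD, hD']; exact key _ _
  · exact hW
  · refine le_trans (ciInf_le ?_ (Equiv.refl _)) ?_
    · refine ⟨0, fun x hx => ?_⟩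
      obtain ⟨ξ, rfl⟩ := hx
      exact le_max_of_le_left
        (Real.iSup_nonneg fun i => Real.iSup_nonneg fun j => abs_nonneg _)
    · simp only [Equiv.coe_refl, Function.comp_id, id_eq]
      refine max_le ?_ hW
      refine ciSup_le fun i => ciSup_le fun j => ?_
      simp only [hD, hD']
      exact hkey (ι i) (ι j)
end
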